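/- arXiv:1807.01053 — 2 statements merged into one kernel-verified Lean document; each statement's English description precedes it below -/
import Mathlib

section
/- For every f : X → H₀M (Y ⊕ X), every x ∈ X, every t ∈ ℝ≥0 and every y ∈ Y: the evolution of the iteration satisfies (f^‡ x).ev t = some y if and only if there exists a natural number n with (f⁽ⁿ⁾ x).ev t = some y. -/
open scoped ENNReal NNReal
open Classical

universe u v w

/-- Raw trajectories: a duration in `ℝ≥0∞` and a partial evolution `ℝ≥0 → Option X`. -/
abbrev Traj (X : Type u) := ℝ≥0∞ × (ℝ≥0 → Option X)

/-- The flattening condition: if the duration is finite, the evolution is constant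
from the duration onwards.  Membership in `H₀M X` means exactly `Flat`. -/
def Flat {X : Type u} (p : Traj X) : Prop :=
  ∀ t : ℝ≥0, p.1 ≤ (t : ℝ≥0∞) → p.2 t = p.2 p.1.toNNReal

/-- The unit of `H₀M`. -/
def eta {X : Type u} (x : X) : Traj X := (0, fun _ => some x)

/-- The Kleisli lifting `f^†` of the monad `H₀M`. -/
noncomputable def kl {X : Type u} {Y : Type v} (f : X → Traj Y) (p : Traj X) : Traj Y :=
  if p.1 = ⊤ then (p.1, fun t => (p.2 t).bind fun x' => (f x').2 0)
  else
    match p.2 p.1.toNNReal with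
    | none => (p.1, fun t => (p.2 t).bind fun x' => (f x').2 0)
    | some x =>
        (p.1 + (f x).1,
          fun t =>
            if (t : ℝ≥0∞) < p.1 then (p.2 t).bind fun x' => (f x').2 0
            else (f x).2 (t - p.1.toNNReal))

/-- Membership in `H₊ X ⊆ H₀M X`: the evolution is not everywhere `none`, and it is
defined at every time instant strictly below the duration. -/
def memHp {X : Type u} (p : Traj X) : Prop :=
  p.2 ≠ (fun _ => none) ∧ ∀ t : ℝ≥0, (t : ℝ≥0∞) < p.1 → p.2 t ≠ none

/-- Membership in `H X ⊆ H₀M X`: either the evolution is total, or the duration is `∞`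
and the domain of the evolution is downward closed. -/
def memH {X : Type u} (p : Traj X) : Prop :=
  (∀ t, p.2 t ≠ none) ∨
    (p.1 = ⊤ ∧ ∀ s t : ℝ≥0, s ≤ t → p.2 t ≠ none → p.2 s ≠ none)

/-- The approximation order `⊑` on `H₀M X`. -/
def TrajLE {X : Type u} (p q : Traj X) : Prop :=
  p.1 ≤ q.1 ∧ (∀ t, p.2 t ≠ none → q.2 t = p.2 t) ∧
    (p.1 ≠ ⊤ → p.2 p.1.toNNReal ≠ none → p.1 = q.1)

/-- Join of an ω-chain in `H₀M X`: the duration is the supremum of the durations, and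
the evolution at `t` is the common value `(c i).2 t` whenever it is `≠ none` for some
`i`, and `none` otherwise. -/
noncomputable def chainJoin {X : Type u} (c : ℕ → Traj X) : Traj X :=
  (⨆ i, (c i).1,
    fun t => if h : ∃ i, (c i).2 t ≠ none then (c h.choose).2 t else none)

/-- `d⋆ = sup { s < d ∣ e is defined on [0, s) }`. -/
noncomputable def dstar {X : Type u} (p : Traj X) : ℝ≥0∞ :=
  sSup {s : ℝ≥0∞ | s < p.1 ∧ ∀ t : ℝ≥0, (t : ℝ≥0∞) < s → p.2 t ≠ none}

/-- The retraction `ρ : H₀M X → H₀M X` onto `H X`. -/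
noncomputable def rho {X : Type u} (p : Traj X) : Traj X :=
  ((if ∀ t, p.2 t ≠ none then p.1 else ⊤),
    fun t =>
      if (t : ℝ≥0∞) ≤ dstar p then p.2 t
      else if ∀ t', p.2 t' ≠ none then p.2 (dstar p).toNNReal else none)

/-- The iterates `f⁽ⁿ⁾` of `f : X → H₀M (Y ⊕ X)`. -/
noncomputable def iter {X Y : Type u} (f : X → Traj (Y ⊕ X)) : ℕ → X → Traj Y
  | 0, _ => (0, fun _ => none)
  | n + 1, x => kl (Sum.elim eta (iter f n)) (f x)

/-- The least-fixpoint iteration `f^‡ x = ⊔ₙ f⁽ⁿ⁾ x`. -/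
noncomputable def iterStar {X Y : Type u} (f : X → Traj (Y ⊕ X)) (x : X) : Traj Y :=
  chainJoin fun n => iter f n x

/-- `f : X → H₊ (A ⊕ B)` is progressive in `B` (guarded in the second summand). -/
def Prog {X : Type u} {A B : Type v} (f : X → Traj (A ⊕ B)) : Prop :=
  ∀ x, ∃ a : A, (f x).2 0 = some (Sum.inl a)

lemma kl_ev_mono {X Y : Type u} {g g' : X → Traj Y}
    (hgg : ∀ z s, (g z).2 s ≠ none → (g' z).2 s = (g z).2 s) (p : Traj X) :
    ∀ t, (kl g p).2 t ≠ none → (kl g' p).2 t = (kl g p).2 t := by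
  intro t
  have hbind : ∀ s : ℝ≥0, ((p.2 s).bind fun x' => (g x').2 0) ≠ none →
      ((p.2 s).bind fun x' => (g' x').2 0) = ((p.2 s).bind fun x' => (g x').2 0) := by
    intro s hs
    cases h : p.2 s with
    | none => simp [h] at hs
    | some x' =>
      simp only [h, Option.bind_some] at hs ⊢
      exact hgg x' 0 hs
  unfold kl
  split
  · exact hbind t
  · rcases h : p.2 p.1.toNNReal with _ | z
    · simp only [h]
      exact hbind t
    · simp only [h]
      by_cases ht : (t : ℝ≥0∞) < p.1
      · simp only [ht, if_true]
        exact hbind t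
      · simp only [ht, if_false]
        exact hgg z _

lemma iter_succ_ev {X Y : Type u} (f : X → Traj (Y ⊕ X)) :
    ∀ n x t, (iter f n x).2 t ≠ none → (iter f (n+1) x).2 t = (iter f n x).2 t := by
  intro n
  induction n with
  | zero => intro x t h; simp [iter] at h
  | succ n ih =>
    intro x t h
    show (kl (Sum.elim eta (iter f (n+1))) (f x)).2 t = _
    refine kl_ev_mono ?_ (f x) t h
    rintro (y | x') s hs
    · rfl
    · exact ih x' s hs

lemma iter_ev_mono {X Y : Type u} (f : X → Traj (Y ⊕ X)) {n m : ℕ} (hnm : n ≤ m)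
    (x : X) (t : ℝ≥0) (h : (iter f n x).2 t ≠ none) :
    (iter f m x).2 t = (iter f n x).2 t := by
  induction m, hnm using Nat.le_induction with
  | base => rfl
  | succ m hm ih =>
    rw [iter_succ_ev f m x t (by rw [ih]; exact h), ih]

/-- The evolution of the iteration `f^‡` is `some y` at `t` iff some finite iterate
already is `some y` at `t`. -/
theorem iterStar_ev_iff {X Y : Type u} (f : X → Traj (Y ⊕ X))
    (hf : ∀ x, Flat (f x)) (x : X) (t : ℝ≥0) (y : Y) :
    (iterStar f x).2 t = some y ↔ ∃ n : ℕ, (iter f n x).2 t = some y := by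
  unfold iterStar chainJoin
  simp only
  constructor
  · intro h
    split at h
    · exact ⟨_, h⟩
    · exact absurd h (by simp)
  · rintro ⟨n, hn⟩
    have hex : ∃ i, (iter f i x).2 t ≠ none := ⟨n, by simp [hn]⟩
    rw [dif_pos hex]
    set i := hex.choose with hi
    have hi' : (iter f i x).2 t ≠ none := hex.choose_spec
    rcases le_total i n with hle | hle
    · rw [← iter_ev_mono f hle x t hi']
      exact hn
    · rw [iter_ev_mono f hle x t (by simp [hn]), hn]
end

section
/- For every f : X → H₀M (Y ⊕ X), every x ∈ X, every natural number n and every t ∈ ℝ≥0: if (f⁽ⁿ⁾ x).ev t ≠ none and ((ρ ∘ f)⁽ⁿ⁾ x).ev t = none, then there exists t' ≤ t such that (f⁽ᵐ⁾ x).ev t' = none for all m ≥ n. -/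
open scoped ENNReal NNReal
open Classical

universe u v w

lemma kl_ev_bind {X : Type u} {Y : Type v} (g : X → Traj Y) (p : Traj X) (s : ℝ≥0)
    (h : p.1 ≠ ⊤ → ((s : ℝ≥0∞) < p.1 ∨ p.2 p.1.toNNReal = none)) :
    (kl g p).2 s = (p.2 s).bind fun x' => (g x').2 0 := by
  unfold kl
  by_cases hd : p.1 = ⊤
  · rw [if_pos hd]
  · rw [if_neg hd]
    rcases hp : p.2 p.1.toNNReal with _ | x
    · rfl
    · rcases h hd with h' | h'
      · simp [h']
      · rw [hp] at h'; exact absurd h' (by simp)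

lemma kl_ev_tail {X : Type u} {Y : Type v} (g : X → Traj Y) (p : Traj X) (s : ℝ≥0)
    (x : X) (hd : p.1 ≠ ⊤) (hx : p.2 p.1.toNNReal = some x)
    (hs : ¬ (s : ℝ≥0∞) < p.1) :
    (kl g p).2 s = (g x).2 (s - p.1.toNNReal) := by
  unfold kl
  rw [if_neg hd]
  rcases hp : p.2 p.1.toNNReal with _ | x'
  · rw [hp] at hx; exact absurd hx (by simp)
  · rw [hp] at hx; obtain rfl : x' = x := by injection hx
    simp [hs]

lemma dstar_eq_of_total {X : Type u} (p : Traj X) (h : ∀ s : ℝ≥0, p.2 s ≠ none) :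
    dstar p = p.1 := by
  unfold dstar
  have he : {s : ℝ≥0∞ | s < p.1 ∧ ∀ t : ℝ≥0, (t : ℝ≥0∞) < s → p.2 t ≠ none} = Set.Iio p.1 := by
    ext s; simp only [Set.mem_setOf_eq, Set.mem_Iio, and_iff_left_iff_imp]
    exact fun _ u _ => h u
  rw [he, isLUB_Iio.sSup_eq]

lemma rho_total {X : Type u} (p : Traj X) (hp : Flat p) (h : ∀ s : ℝ≥0, p.2 s ≠ none) :
    (rho p).1 = p.1 ∧ ∀ s : ℝ≥0, (rho p).2 s = p.2 s := by
  constructor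
  · exact if_pos h
  · intro s
    show (if (s : ℝ≥0∞) ≤ dstar p then p.2 s
      else if ∀ t', p.2 t' ≠ none then p.2 (dstar p).toNNReal else none) = p.2 s
    rw [dstar_eq_of_total p h]
    by_cases hs : (s : ℝ≥0∞) ≤ p.1
    · rw [if_pos hs]
    · rw [if_neg hs, if_pos h]
      exact (hp s (le_of_not_ge hs)).symm

lemma dstar_ge {X : Type u} (p : Traj X) (s : ℝ≥0) (h1 : (s : ℝ≥0∞) < p.1)
    (h2 : ∀ u : ℝ≥0, (u : ℝ≥0∞) < (s : ℝ≥0∞) → p.2 u ≠ none) :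
    (s : ℝ≥0∞) ≤ dstar p :=
  le_sSup ⟨h1, h2⟩

/-- If the `n`-th iterate of `f` is defined at `t` while the `n`-th iterate of
`ρ ∘ f` is undefined at `t`, then there is `t' ≤ t` at which all later iterates of
`f` are undefined. -/
theorem iter_rho_divergence {X Y : Type u} (f : X → Traj (Y ⊕ X))
    (hf : ∀ x, Flat (f x)) (x : X) (n : ℕ) (t : ℝ≥0)
    (h1 : (iter f n x).2 t ≠ none)
    (h2 : (iter (fun x' => rho (f x')) n x).2 t = none) :
    ∃ t' : ℝ≥0, t' ≤ t ∧ ∀ m : ℕ, n ≤ m → (iter f m x).2 t' = none := by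
  induction n generalizing x t with
  | zero => exact absurd rfl h1
  | succ n ih =>
    simp only [iter] at h1 h2
    by_cases hc : ∃ t₀ : ℝ≥0, t₀ ≤ t ∧ (t₀ : ℝ≥0∞) < (f x).1 ∧ (f x).2 t₀ = none
    · -- a hole below the duration: all later iterates vanish there
      obtain ⟨t₀, ht₀, hlt, hnone⟩ := hc
      refine ⟨t₀, ht₀, ?_⟩
      intro m hm
      obtain ⟨k, rfl⟩ : ∃ k, m = k + 1 := ⟨m - 1, (Nat.succ_pred_eq_of_pos (by omega)).symm⟩
      show (kl (Sum.elim eta (iter f k)) (f x)).2 t₀ = none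
      rw [kl_ev_bind _ _ _ (fun _ => Or.inl hlt), hnone]
      rfl
    · push_neg at hc
      by_cases hlt : (t : ℝ≥0∞) < (f x).1
      · -- Situation I : t below the duration
        have hb1 : (kl (Sum.elim eta (iter f n)) (f x)).2 t
            = ((f x).2 t).bind (fun x' => ((Sum.elim eta (iter f n)) x').2 0) :=
          kl_ev_bind _ _ _ (fun _ => Or.inl hlt)
        rcases hev : (f x).2 t with _ | x''
        · rw [hb1, hev] at h1; exact absurd rfl h1
        rw [hb1, hev] at h1
        -- rho side: evolution agrees at t
        have hEt : (rho (f x)).2 t = (f x).2 t := by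
          show (if (t : ℝ≥0∞) ≤ dstar (f x) then (f x).2 t else _) = (f x).2 t
          rw [if_pos (dstar_ge (f x) t hlt (fun u hu => by
            have hu' : u < t := by exact_mod_cast hu
            exact hc u hu'.le (lt_trans (by exact_mod_cast hu') hlt)))]
        have hD : (rho (f x)).1 = if (∀ s, (f x).2 s ≠ none) then (f x).1 else ⊤ := rfl
        have hb2 : (kl (Sum.elim eta (iter (fun x' => rho (f x')) n)) (rho (f x))).2 t
            = ((rho (f x)).2 t).bind
              (fun x' => ((Sum.elim eta (iter (fun x' => rho (f x')) n)) x').2 0) := by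
          refine kl_ev_bind _ _ _ (fun hDt => Or.inl ?_)
          by_cases htot : ∀ s, (f x).2 s ≠ none
          · rw [hD, if_pos htot]; exact hlt
          · rw [hD, if_neg htot] at hDt; exact absurd rfl hDt
        rw [hb2, hEt, hev] at h2
        -- x'' cannot be in the left summand
        rcases x'' with y | x₁
        · simp [eta] at h2
        simp only [Sum.elim_inr, Option.bind_some] at h1 h2
        obtain ⟨t'', ht'', hall⟩ := ih x₁ 0 h1 h2
        obtain rfl : t'' = 0 := le_antisymm ht'' zero_le
        refine ⟨t, le_rfl, ?_⟩
        intro m hm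
        obtain ⟨k, rfl⟩ : ∃ k, m = k + 1 := ⟨m - 1, (Nat.succ_pred_eq_of_pos (by omega)).symm⟩
        show (kl (Sum.elim eta (iter f k)) (f x)).2 t = none
        rw [kl_ev_bind _ _ _ (fun _ => Or.inl hlt), hev]
        simpa using hall k (by omega)
      · -- Situation II/III : t at or beyond the (finite) duration
        have hd : (f x).1 ≠ ⊤ := fun h => hlt (h ▸ ENNReal.coe_lt_top)
        have hdt : (f x).1 ≤ (t : ℝ≥0∞) := not_lt.1 hlt
        rcases hv : (f x).2 (f x).1.toNNReal with _ | v
        · -- III: evolution undefined at the duration, hence at t: contradiction with h1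
          rw [kl_ev_bind _ _ _ (fun _ => Or.inr hv), hf x t hdt, hv] at h1
          exact absurd rfl h1
        · -- II: evolution is total
          have htot : ∀ s : ℝ≥0, (f x).2 s ≠ none := by
            intro s hs
            by_cases h' : (s : ℝ≥0∞) < (f x).1
            · have hst : (s : ℝ≥0∞) ≤ (t : ℝ≥0∞) := h'.le.trans hdt
              exact hc s (by exact_mod_cast hst) h' hs
            · rw [hf x s (not_lt.1 h')] at hs
              rw [hv] at hs; exact Option.some_ne_none v hs
          obtain ⟨hDq, hE⟩ := rho_total (f x) (hf x) htot
          have hreq : rho (f x) = f x := Prod.ext hDq (funext hE)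
          rw [hreq] at h2
          rw [kl_ev_tail _ _ _ v hd hv hlt] at h1 h2
          rcases v with y | x₁
          · simp [eta] at h2
          simp only [Sum.elim_inr] at h1 h2
          obtain ⟨t'', ht'', hall⟩ := ih x₁ (t - (f x).1.toNNReal) h1 h2
          have hdN : (f x).1.toNNReal ≤ t := by
            have : ((f x).1.toNNReal : ℝ≥0∞) ≤ (t : ℝ≥0∞) := by
              rwa [ENNReal.coe_toNNReal hd]
            exact_mod_cast this
          refine ⟨t'' + (f x).1.toNNReal, ?_, ?_⟩
          · calc t'' + (f x).1.toNNReal ≤ (t - (f x).1.toNNReal) + (f x).1.toNNReal :=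
                add_le_add_left ht'' _
              _ = t := tsub_add_cancel_of_le hdN
          · intro m hm
            obtain ⟨k, rfl⟩ : ∃ k, m = k + 1 := ⟨m - 1, (Nat.succ_pred_eq_of_pos (by omega)).symm⟩
            show (kl (Sum.elim eta (iter f k)) (f x)).2 (t'' + (f x).1.toNNReal) = none
            have hnl : ¬ ((t'' + (f x).1.toNNReal : ℝ≥0) : ℝ≥0∞) < (f x).1 := by
              rw [not_lt, ← ENNReal.coe_toNNReal hd]
              exact_mod_cast le_add_self
            rw [kl_ev_tail _ _ _ (Sum.inr x₁) hd hv hnl]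
            simp only [Sum.elim_inr, add_tsub_cancel_right]
            exact hall k (by omega)
end
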